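/- Let h_1, h_2 be nonzero real numbers such that H = h_1ℤ + h_2ℤ is dense in ℝ, and let m ≥ 1. Define f : ℝ → ℝ by f(x) = x(x−1)···(x−(m−1)) if x ∈ H and f(x) = 0 otherwise. Then Δ_{h_1}^{m+1} f(x) = 0 and Δ_{h_2}^{m+1} f(x) = 0 for all x ∈ ℝ, f is continuous at each of the m points 0, 1, ..., m−1, and f is not a polynomial function on ℝ. -/

import Mathlib

open scoped Classical

private lemma fwdDiff_iter_zero_fun (h : ℝ) (n : ℕ) :
    (fwdDiff h)^[n] (fun _ : ℝ => (0:ℝ)) = fun _ => 0 := by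
  induction n with
  | zero => rfl
  | succ n ih => rw [Function.iterate_succ_apply]; simpa [fwdDiff] using ih

private lemma fwdDiff_iter_poly (h : ℝ) :
    ∀ (n : ℕ) (q : Polynomial ℝ), q.natDegree < n →
      ∀ x, (fwdDiff h)^[n] (fun y => q.eval y) x = 0 := by
  intro n
  induction n with
  | zero => intro q hq x; exact absurd hq (Nat.not_lt_zero _)
  | succ n ih =>
    intro q hq x
    rw [Function.iterate_succ_apply]
    have hdiff : fwdDiff h (fun y => q.eval y)
        = fun y => (q.comp (Polynomial.X + Polynomial.C h) - q).eval y := by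
      funext y
      simp [fwdDiff, Polynomial.eval_comp]
    rw [hdiff]
    set r := q.comp (Polynomial.X + Polynomial.C h) - q with hr
    rcases eq_or_ne r 0 with h0 | h0
    · rw [h0]
      simpa using congrFun (fwdDiff_iter_zero_fun h n) x
    · have hqd : q.natDegree ≠ 0 := by
        intro hq0
        apply h0
        rw [hr, Polynomial.eq_C_of_natDegree_eq_zero hq0]
        simp
      have hlc : (q.comp (Polynomial.X + Polynomial.C h)).leadingCoeff = q.leadingCoeff := by
        rw [Polynomial.leadingCoeff_comp (by simp)]
        simp
      have hq0 : q ≠ 0 := by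
        intro hq0; exact hqd (by simp [hq0])
      have hcomp0 : q.comp (Polynomial.X + Polynomial.C h) ≠ 0 := by
        intro hc
        apply hq0
        rw [← Polynomial.leadingCoeff_eq_zero, ← hlc, hc, Polynomial.leadingCoeff_zero]
      have hdeg : (q.comp (Polynomial.X + Polynomial.C h)).degree = q.degree := by
        rw [Polynomial.degree_eq_natDegree hcomp0, Polynomial.degree_eq_natDegree hq0,
          Polynomial.natDegree_comp]
        simp
      have hlt : r.degree < q.degree := hdeg ▸ Polynomial.degree_sub_lt hdeg hcomp0 hlc
      have hltn : r.natDegree < n := by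
        have h1 : r.natDegree < q.natDegree := by
          have := Polynomial.natDegree_lt_natDegree h0 hlt
          exact this
        omega
      exact ih r hltn x

theorem popoviciu_optimality (m : ℕ) (hm : 1 ≤ m) (h₁ h₂ : ℝ) (hh₁ : h₁ ≠ 0) (hh₂ : h₂ ≠ 0)
    (hdense : Dense ((AddSubgroup.closure {h₁, h₂} : AddSubgroup ℝ) : Set ℝ))
    (f : ℝ → ℝ)
    (hf : ∀ x : ℝ, f x =
      if x ∈ (AddSubgroup.closure {h₁, h₂} : AddSubgroup ℝ)
      then ∏ k ∈ Finset.range m, (x - k) else 0) :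
    (∀ x : ℝ, ∑ k ∈ Finset.range (m + 2),
        ((m + 1).choose k : ℝ) * (-1) ^ (m + 1 - k) * f (x + k * h₁) = 0) ∧
    (∀ x : ℝ, ∑ k ∈ Finset.range (m + 2),
        ((m + 1).choose k : ℝ) * (-1) ^ (m + 1 - k) * f (x + k * h₂) = 0) ∧
    (∀ k : ℕ, k < m → ContinuousAt f (k : ℝ)) ∧
    ¬∃ p : Polynomial ℝ, ∀ x : ℝ, f x = p.eval x := by
  set H := (AddSubgroup.closure {h₁, h₂} : AddSubgroup ℝ) with hH
  set Q : Polynomial ℝ := ∏ k ∈ Finset.range m, (Polynomial.X - Polynomial.C (k:ℝ)) with hQ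
  have hQeval : ∀ y : ℝ, Q.eval y = ∏ k ∈ Finset.range m, (y - k) := by
    intro y
    rw [hQ, Polynomial.eval_prod]
    exact Finset.prod_congr rfl (fun k _ => by simp)
  have hQmonic : Q.Monic := Polynomial.monic_prod_of_monic _ _
    (fun k _ => Polynomial.monic_X_sub_C _)
  have hQdeg : Q.natDegree = m := by
    rw [hQ, Polynomial.natDegree_prod _ _ (fun k _ => Polynomial.X_sub_C_ne_zero _)]
    simp only [Polynomial.natDegree_X_sub_C, Finset.sum_const, Finset.card_range, smul_eq_mul,
      mul_one]
  -- the key finite-difference claim, for any h ∈ H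
  have key : ∀ h : ℝ, h ∈ H → ∀ x : ℝ,
      ∑ k ∈ Finset.range (m + 2),
        ((m + 1).choose k : ℝ) * (-1) ^ (m + 1 - k) * f (x + k * h) = 0 := by
    intro h hh x
    by_cases hx : x ∈ H
    · have hmem : ∀ k : ℕ, x + k * h ∈ H := fun k => by
        have : (k : ℝ) * h = (k : ℤ) • h := by simp
        exact H.add_mem hx (by rw [this]; exact zsmul_mem hh _)
      have hsum : ∑ k ∈ Finset.range (m + 2),
          ((m + 1).choose k : ℝ) * (-1) ^ (m + 1 - k) * f (x + k * h)
          = (fwdDiff h)^[m + 1] (fun y => Q.eval y) x := by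
        rw [fwdDiff_iter_eq_sum_shift]
        refine Finset.sum_congr rfl (fun k _ => ?_)
        rw [hf (x + k * h), if_pos (hmem k), ← hQeval]
        have : (k : ℕ) • h = (k : ℝ) * h := by simp
        rw [this, zsmul_eq_mul]
        push_cast
        ring
      rw [hsum]
      exact fwdDiff_iter_poly h (m + 1) Q (by omega) x
    · have hmem : ∀ k : ℕ, x + k * h ∉ H := by
        intro k hk
        apply hx
        have : (k : ℝ) * h = (k : ℤ) • h := by simp
        have h2 : (k : ℝ) * h ∈ H := by rw [this]; exact zsmul_mem hh _
        simpa using H.sub_mem hk h2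
      refine Finset.sum_eq_zero (fun k _ => ?_)
      rw [hf (x + k * h), if_neg (hmem k), mul_zero]
  have hmem₁ : h₁ ∈ H := AddSubgroup.subset_closure (by simp)
  have hmem₂ : h₂ ∈ H := AddSubgroup.subset_closure (by simp)
  refine ⟨key h₁ hmem₁, key h₂ hmem₂, ?_, ?_⟩
  · -- continuity at k for k < m
    intro k hk
    have hfk : f (k : ℝ) = 0 := by
      rw [hf]
      split_ifs with h
      · exact Finset.prod_eq_zero (Finset.mem_range.2 hk) (by simp)
      · rfl
    rw [ContinuousAt, hfk]
    apply squeeze_zero_norm (a := fun x => ‖∏ i ∈ Finset.range m, (x - (i:ℝ))‖)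
    · intro x
      rw [hf x]
      split_ifs with h
      · exact le_refl _
      · simp only [norm_zero]; exact norm_nonneg _
    · have hcont : Continuous fun x : ℝ => ‖∏ i ∈ Finset.range m, (x - (i:ℝ))‖ :=
        (continuous_finset_prod _ (fun i _ => continuous_id.sub continuous_const)).norm
      have := hcont.tendsto (k : ℝ)
      have hzero : ‖∏ i ∈ Finset.range m, ((k:ℝ) - (i:ℝ))‖ = 0 := by
        rw [Finset.prod_eq_zero (Finset.mem_range.2 hk) (by simp)]
        simp
      rwa [hzero] at this
  · -- not a polynomial
    rintro ⟨p, hp⟩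
    have hpQ : ∀ x : ℝ, p.eval x = Q.eval x := by
      have heq : Set.EqOn (fun x : ℝ => p.eval x) (fun x : ℝ => Q.eval x) (H : Set ℝ) := by
        intro x hx
        simp only
        rw [← hp x, hf x, if_pos (show x ∈ H from hx), hQeval]
      have := Continuous.ext_on hdense (Polynomial.continuous p) (Polynomial.continuous Q) heq
      exact fun x => congrFun this x
    have hcount : (H : Set ℝ).Countable := by
      have hsub : (H : Set ℝ) ⊆ Set.range (fun pr : ℤ × ℤ => pr.1 * h₁ + pr.2 * h₂) := by
        intro x hx
        have : x ∈ AddSubgroup.closure ({h₁} ∪ {h₂} : Set ℝ) := by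
          rw [Set.singleton_union]; exact hx
        rw [AddSubgroup.closure_union, AddSubgroup.mem_sup] at this
        obtain ⟨y, hy, z, hz, rfl⟩ := this
        rw [AddSubgroup.mem_closure_singleton] at hy hz
        obtain ⟨a, rfl⟩ := hy
        obtain ⟨b, rfl⟩ := hz
        exact ⟨(a, b), by simp [zsmul_eq_mul]⟩
      exact (Set.countable_range _).mono hsub
    have hQne : Q ≠ 0 := hQmonic.ne_zero
    have hroots : {x : ℝ | Q.IsRoot x}.Finite := Polynomial.finite_setOf_isRoot hQne
    have hbig : ((H : Set ℝ) ∪ {x : ℝ | Q.IsRoot x}) ≠ Set.univ := by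
      intro hu
      have : (Set.univ : Set ℝ).Countable := hu ▸ hcount.union hroots.countable
      exact Cardinal.not_countable_real (by simpa using this)
    obtain ⟨x, hx⟩ := (Set.ne_univ_iff_exists_notMem _).1 hbig
    rw [Set.mem_union, not_or] at hx
    obtain ⟨hxH, hxR⟩ := hx
    have h1 : f x = 0 := by rw [hf x, if_neg (show x ∉ H from hxH)]
    have h2 : Q.eval x = 0 := by rw [← hpQ x, ← hp x, h1]
    exact hxR h2
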